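/- Let Ω be an ω-monoid with at least one nonzero element whose minimal generating set G(Ω) = Ω* \ (Ω* + Ω*) is finite. Then Ω is a tempered monoid if and only if G(Ω) is not commensurable, i.e., if and only if there exist nonzero λ, μ ∈ G(Ω) with λ/μ irrational. -/

import Mathlib

open Filter Topology Pointwise

private lemma omega_nsmul_mem (Ω : Set ℝ) (hz : (0:ℝ) ∈ Ω)
    (hadd : ∀ x ∈ Ω, ∀ y ∈ Ω, x + y ∈ Ω) :
    ∀ (n : ℕ) (w : ℝ), w ∈ Ω → (n : ℝ) * w ∈ Ω := by
  intro n w hw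
  induction n with
  | zero => simpa
  | succ n ih =>
    push_cast
    rw [add_mul, one_mul]
    exact hadd _ ih _ hw

private lemma omega_cover (Ω : Set ℝ) (hz : (0:ℝ) ∈ Ω)
    (hadd : ∀ x ∈ Ω, ∀ y ∈ Ω, x + y ∈ Ω)
    (u v : ℝ) (hu : u ∈ Ω) (hv : v ∈ Ω) (hv0 : 0 < v)
    (p q : ℕ) (hβ0 : 0 < (p:ℝ)*u - q*v) :
    ∃ C : ℝ, ∀ x : ℝ, C ≤ x → ∃ ω ∈ Ω, x < ω ∧ ω ≤ x + ((p:ℝ)*u - q*v) := by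
  set β := (p:ℝ)*u - q*v with hβ
  set K := ⌈v / β⌉₊ with hK
  have hKβ : v ≤ K * β := by
    have h1 := Nat.le_ceil (v / β)
    calc v = (v/β)*β := by field_simp
    _ ≤ K * β := by
        apply mul_le_mul_of_nonneg_right _ hβ0.le
        exact_mod_cast h1
  refine ⟨(K:ℝ) * q * v, fun x hx => ?_⟩
  set y := x - K * q * v with hy
  have hy0 : 0 ≤ y := by simp [hy]; linarith
  set j := ⌊y / v⌋₊ with hj
  have hjv : (j:ℝ) * v ≤ y := by
    have h1 := Nat.floor_le (by positivity : 0 ≤ y / v)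
    calc (j:ℝ)*v ≤ (y/v)*v := mul_le_mul_of_nonneg_right h1 hv0.le
    _ = y := by field_simp
  have hjv' : y < ((j:ℝ)+1) * v := by
    have h1 := Nat.lt_floor_add_one (y / v)
    calc y = (y/v)*v := by field_simp
    _ < ((j:ℝ)+1)*v := by
        apply mul_lt_mul_of_pos_right _ hv0
        exact_mod_cast h1
  set r := y - j * v with hr
  have hr0 : 0 ≤ r := by simp [hr]; linarith
  have hrv : r < v := by simp [hr]; nlinarith
  set k := ⌊r / β⌋₊ + 1 with hk
  have hk1 : ((k:ℝ) - 1) * β ≤ r := by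
    have h1 := Nat.floor_le (by positivity : 0 ≤ r / β)
    have : ((k:ℝ) - 1) = (⌊r / β⌋₊ : ℝ) := by push_cast [hk]; ring
    rw [this]
    calc (⌊r / β⌋₊:ℝ)*β ≤ (r/β)*β := mul_le_mul_of_nonneg_right h1 hβ0.le
    _ = r := by field_simp
  have hk2 : r < (k:ℝ) * β := by
    have h1 := Nat.lt_floor_add_one (r / β)
    have hkc : ((k:ℝ)) = (⌊r / β⌋₊ : ℝ) + 1 := by push_cast [hk]; ring
    rw [hkc]
    calc r = (r/β)*β := by field_simp
    _ < ((⌊r / β⌋₊:ℝ)+1)*β := mul_lt_mul_of_pos_right h1 hβ0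
  have hkK : k ≤ K := by
    have : ((k:ℝ) - 1) * β < (K:ℝ) * β := by nlinarith
    have h2 : ((k:ℝ) - 1) < K := lt_of_mul_lt_mul_right this hβ0.le
    have : (k:ℝ) < (K:ℝ) + 1 := by linarith
    exact_mod_cast Nat.lt_succ_iff.mp (by exact_mod_cast this)
  have hcast : (((K-k)*q + j : ℕ):ℝ) = ((K:ℝ) - k)*q + j := by
    push_cast [Nat.cast_sub hkK]; ring
  have hval : ((k*p:ℕ):ℝ) * u + (((K-k)*q + j : ℕ):ℝ) * v = x + ((k:ℝ)*β - r) := by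
    rw [hcast, hβ, hr, hy]
    push_cast
    ring
  refine ⟨((k*p:ℕ):ℝ) * u + (((K-k)*q + j : ℕ):ℝ) * v, ?_, ?_, ?_⟩
  · exact hadd _ (omega_nsmul_mem Ω hz hadd _ _ hu) _ (omega_nsmul_mem Ω hz hadd _ _ hv)
  · rw [hval]; linarith
  · rw [hval]; linarith

private lemma omega_small (Ω : Set ℝ) (hz : (0:ℝ) ∈ Ω)
    (hadd : ∀ x ∈ Ω, ∀ y ∈ Ω, x + y ∈ Ω)
    (l m : ℝ) (hl : l ∈ Ω) (hm : m ∈ Ω) (hl0 : 0 < l) (hm0 : 0 < m)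
    (hirr : Irrational (l / m)) (ε : ℝ) (hε : 0 < ε) :
    ∃ u ∈ Ω, ∃ v ∈ Ω, 0 < v ∧ ∃ p q : ℕ,
      0 < (p:ℝ)*u - q*v ∧ (p:ℝ)*u - q*v ≤ ε := by
  rcases (AddSubgroup.closure ({l, m} : Set ℝ)).dense_or_cyclic with hD | ⟨g, hg⟩
  · -- dense case
    obtain ⟨t, htS, ht⟩ := hD.exists_mem_open isOpen_Ioo (Set.nonempty_Ioo.2 hε)
    obtain ⟨ht0, htε⟩ := ht
    rw [show ({l, m} : Set ℝ) = {l} ∪ {m} by rfl, AddSubgroup.closure_union] at htS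
    rw [SetLike.mem_coe, AddSubgroup.mem_sup] at htS
    obtain ⟨y, hy, z, hzz, hyz⟩ := htS
    obtain ⟨n, rfl⟩ := AddSubgroup.mem_closure_singleton.mp hy
    obtain ⟨c, rfl⟩ := AddSubgroup.mem_closure_singleton.mp hzz
    have hyz' : (n:ℝ) * l + (c:ℝ) * m = t := by
      rw [← hyz]; push_cast [zsmul_eq_mul]; ring
    rcases le_or_gt 0 n with hn | hn
    · rcases le_or_gt 0 c with hc | hc
      · -- both nonneg : t itself is in Ω
        have htΩ : t ∈ Ω := by
          rw [← hyz']
          have h1 : (n:ℝ) = ((n.toNat : ℕ) : ℝ) := by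
            exact_mod_cast (Int.toNat_of_nonneg hn).symm
          have h2 : (c:ℝ) = ((c.toNat : ℕ) : ℝ) := by
            exact_mod_cast (Int.toNat_of_nonneg hc).symm
          rw [h1, h2]
          exact hadd _ (omega_nsmul_mem Ω hz hadd _ _ hl) _
            (omega_nsmul_mem Ω hz hadd _ _ hm)
        exact ⟨t, htΩ, m, hm, hm0, 1, 0, by push_cast; simpa using ⟨ht0, htε.le⟩⟩
      · -- n ≥ 0, c < 0
        refine ⟨l, hl, m, hm, hm0, n.toNat, (-c).toNat, ?_⟩
        have : ((n.toNat:ℕ):ℝ)*l - ((-c).toNat:ℕ)*m = t := by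
          have h1 : ((n.toNat:ℕ):ℝ) = (n:ℝ) := by
            exact_mod_cast Int.toNat_of_nonneg hn
          have h2 : (((-c).toNat:ℕ):ℝ) = ((-c:ℤ):ℝ) := by
            exact_mod_cast Int.toNat_of_nonneg (by omega : (0:ℤ) ≤ -c)
          rw [h1, h2]
          push_cast
          linarith [hyz']
        rw [this]
        exact ⟨ht0, htε.le⟩
    · -- n < 0, hence c > 0
      have hc : 0 < c := by
        by_contra hc
        push_neg at hc
        have h1 : (n:ℝ) * l < 0 :=
          mul_neg_of_neg_of_pos (by exact_mod_cast hn) hl0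
        have h2 : (c:ℝ) * m ≤ 0 :=
          mul_nonpos_of_nonpos_of_nonneg (by exact_mod_cast hc) hm0.le
        linarith
      refine ⟨m, hm, l, hl, hl0, c.toNat, (-n).toNat, ?_⟩
      have : ((c.toNat:ℕ):ℝ)*m - ((-n).toNat:ℕ)*l = t := by
        have h1 : ((c.toNat:ℕ):ℝ) = (c:ℝ) := by
          exact_mod_cast Int.toNat_of_nonneg hc.le
        have h2 : (((-n).toNat:ℕ):ℝ) = ((-n:ℤ):ℝ) := by
          exact_mod_cast Int.toNat_of_nonneg (by omega : (0:ℤ) ≤ -n)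
        rw [h1, h2]
        push_cast
        linarith [hyz']
      rw [this]
      exact ⟨ht0, htε.le⟩
  · -- cyclic case: contradiction with irrationality
    exfalso
    have hlS : l ∈ AddSubgroup.closure ({l, m} : Set ℝ) :=
      AddSubgroup.subset_closure (by simp)
    have hmS : m ∈ AddSubgroup.closure ({l, m} : Set ℝ) :=
      AddSubgroup.subset_closure (by simp)
    rw [hg] at hlS hmS
    obtain ⟨n, hn⟩ := AddSubgroup.mem_closure_singleton.mp hlS
    obtain ⟨c, hc⟩ := AddSubgroup.mem_closure_singleton.mp hmS
    have hg0 : g ≠ 0 := by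
      rintro rfl
      simp at hn
      exact hl0.ne' hn.symm
    have hc0 : (c:ℝ) ≠ 0 := by
      rintro hc0
      rw [zsmul_eq_mul, hc0, zero_mul] at hc
      exact hm0.ne' hc.symm
    have : l / m = ((n / c : ℚ) : ℝ) := by
      rw [← hn, ← hc]
      push_cast [zsmul_eq_mul]
      rw [mul_div_mul_right _ _ hg0]
    rw [this] at hirr
    exact (Rat.not_irrational _) hirr

/-- An ω-monoid with finite minimal generating set is a tempered monoid iff its minimal
generating set is not commensurable. -/
theorem finite_minimal_generating_set_tempered_iff_not_commensurable
    (Ω : Set ℝ) (a : ℕ → ℝ)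
    (hadd : ∀ x ∈ Ω, ∀ y ∈ Ω, x + y ∈ Ω)
    (hmono : StrictMono a) (h0 : a 0 = 0) (hrange : Set.range a = Ω)
    (hne : ∃ x ∈ Ω, x ≠ 0)
    (hfin : ((Ω \ {0}) \ ((Ω \ {0}) + (Ω \ {0}))).Finite) :
    Tendsto (fun n => a (n + 1) - a n) atTop (𝓝 0) ↔
      ∃ l ∈ (Ω \ {0}) \ ((Ω \ {0}) + (Ω \ {0})),
        ∃ m ∈ (Ω \ {0}) \ ((Ω \ {0}) + (Ω \ {0})),
          l ≠ 0 ∧ m ≠ 0 ∧ Irrational (l / m) := by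
  have hz : (0:ℝ) ∈ Ω := h0 ▸ (hrange ▸ Set.mem_range_self 0)
  have ha1 : 0 < a 1 := h0 ▸ hmono (Nat.zero_lt_one)
  -- every nonzero element of Ω is ≥ a 1 (in particular positive)
  have hge : ∀ w ∈ Ω, w ≠ 0 → a 1 ≤ w := by
    intro w hw hw0
    obtain ⟨i, rfl⟩ := hrange ▸ hw
    have hi : i ≠ 0 := by rintro rfl; exact hw0 h0
    exact hmono.monotone (Nat.one_le_iff_ne_zero.mpr hi)
  -- a is unbounded
  have hub : ∀ M : ℝ, ∃ n, M < a n := by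
    intro M
    obtain ⟨k, hk⟩ := exists_nat_gt (M / a 1)
    have hkΩ : (k:ℝ) * a 1 ∈ Ω := omega_nsmul_mem Ω hz hadd k _ (hrange ▸ Set.mem_range_self 1)
    obtain ⟨n, hn⟩ := hrange ▸ hkΩ
    refine ⟨n, ?_⟩
    rw [hn]
    calc M = (M / a 1) * a 1 := by field_simp
    _ < (k:ℝ) * a 1 := mul_lt_mul_of_pos_right hk ha1
  constructor
  · -- tempered → not commensurable
    intro htend
    by_contra hcon
    push_neg at hcon
    set G := (Ω \ {0}) \ ((Ω \ {0}) + (Ω \ {0})) with hG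
    -- a 1 ∈ G
    have ha1G : a 1 ∈ G := by
      refine ⟨⟨hrange ▸ Set.mem_range_self 1, ha1.ne'⟩, ?_⟩
      intro hsum
      obtain ⟨x, hx, y, hy, hxy⟩ := Set.mem_add.mp hsum
      have hx1 := hge x hx.1 hx.2
      have hy1 := hge y hy.1 hy.2
      linarith
    -- each g in G is a rational multiple of a 1
    have hrat : ∀ g ∈ G, ∃ r : ℚ, g = (r:ℝ) * a 1 := by
      intro g hg
      have hg0 : g ≠ 0 := hg.1.2
      have := hcon g hg (a 1) ha1G hg0 ha1.ne'
      rw [Irrational] at this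
      push_neg at this
      obtain ⟨r, hr⟩ := this
      exact ⟨r, by rw [hr, div_mul_cancel₀ _ ha1.ne']⟩
    -- common denominator
    have hRfin : (Set.Finite {r : ℚ | (r:ℝ) * a 1 ∈ G}) := by
      apply Set.Finite.preimage _ hfin
      intro r _ s _ h
      have : (r:ℝ) = s := mul_right_cancel₀ ha1.ne' h
      exact_mod_cast this
    set R := hRfin.toFinset with hR
    set D : ℕ := R.prod (fun r => r.den) with hD
    have hDpos : 0 < D := Finset.prod_pos (fun r _ => r.pos)
    set δ : ℝ := a 1 / D with hδ
    have hδ0 : 0 < δ := by positivity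
    -- each g ∈ G is a natural multiple of δ
    have key : ∀ g ∈ G, ∃ k : ℕ, g = (k:ℝ) * δ := by
      intro g hg
      obtain ⟨r, hr⟩ := hrat g hg
      have hrR : r ∈ R := hRfin.mem_toFinset.mpr (by simp only [Set.mem_setOf_eq, ← hr]; exact hg)
      obtain ⟨c, hc⟩ := Finset.dvd_prod_of_mem (fun r => r.den) hrR
      have hq : (r * D : ℚ) = ((r.num * c : ℤ) : ℚ) := by
        have hc2 : (D:ℚ) = (r.den : ℚ) * (c:ℚ) := by rw [hD]; exact_mod_cast hc
        rw [hc2, show (r * ((r.den:ℚ) * c)) = (r * r.den) * c by ring,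
          Rat.mul_den_eq_num]
        push_cast
        ring
      have hr0 : 0 < r := by
        have hg0 : 0 < g := lt_of_lt_of_le ha1 (hge g hg.1.1 hg.1.2)
        by_contra hr0
        push_neg at hr0
        have : (r:ℝ) ≤ 0 := by exact_mod_cast hr0
        nlinarith
      have hnum0 : 0 ≤ r.num * c := by
        have : (0:ℚ) ≤ r * D := by positivity
        rw [hq] at this
        exact_mod_cast this
      refine ⟨(r.num * c).toNat, ?_⟩
      have hcast : (((r.num * c).toNat : ℕ) : ℝ) = ((r.num * c : ℤ) : ℝ) := by
        exact_mod_cast Int.toNat_of_nonneg hnum0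
      have hq' : (r:ℝ) * D = ((r.num * c : ℤ) : ℝ) := by exact_mod_cast hq
      rw [hr, hδ, hcast, ← hq']
      field_simp
    -- every a n is a natural multiple of δ
    have hall : ∀ n : ℕ, ∃ k : ℕ, a n = (k:ℝ) * δ := by
      intro n
      induction n using Nat.strong_induction_on with
      | _ n ih =>
        rcases Nat.eq_zero_or_pos n with rfl | hn
        · exact ⟨0, by rw [h0]; simp⟩
        have hanΩ : a n ∈ Ω := hrange ▸ Set.mem_range_self n
        have han0 : a n ≠ 0 := by
          have : a 0 < a n := hmono hn
          rw [h0] at this; exact this.ne'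
        by_cases hg : a n ∈ G
        · exact key _ hg
        · have hsum : a n ∈ (Ω \ {0}) + (Ω \ {0}) := by
            by_contra h
            exact hg ⟨⟨hanΩ, han0⟩, h⟩
          obtain ⟨x, hx, y, hy, hxy⟩ := Set.mem_add.mp hsum
          obtain ⟨i, rfl⟩ := hrange ▸ hx.1
          obtain ⟨j, rfl⟩ := hrange ▸ hy.1
          have hxpos : 0 < a i := lt_of_lt_of_le ha1 (hge _ hx.1 hx.2)
          have hypos : 0 < a j := lt_of_lt_of_le ha1 (hge _ hy.1 hy.2)
          have hilt : i < n := hmono.lt_iff_lt.mp (by linarith)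
          have hjlt : j < n := hmono.lt_iff_lt.mp (by linarith)
          obtain ⟨ki, hki⟩ := ih i hilt
          obtain ⟨kj, hkj⟩ := ih j hjlt
          exact ⟨ki + kj, by rw [← hxy, hki, hkj]; push_cast; ring⟩
    -- contradiction: gaps are ≥ δ
    obtain ⟨N, hN⟩ := (Metric.tendsto_atTop.mp htend) δ hδ0
    have hdist := hN N le_rfl
    obtain ⟨k1, hk1⟩ := hall N
    obtain ⟨k2, hk2⟩ := hall (N + 1)
    have hlt : a N < a (N + 1) := hmono (Nat.lt_succ_self N)
    have hkk : k1 < k2 := by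
      by_contra h
      push_neg at h
      have : (k2:ℝ) ≤ k1 := by exact_mod_cast h
      nlinarith
    have hgap : δ ≤ a (N + 1) - a N := by
      rw [hk1, hk2]
      have : (k1:ℝ) + 1 ≤ k2 := by exact_mod_cast hkk
      nlinarith
    rw [Real.dist_eq, sub_zero, abs_of_pos (by linarith)] at hdist
    linarith
  · -- not commensurable → tempered
    rintro ⟨l, hlG, m, hmG, hl0, hm0, hirr⟩
    have hlΩ : l ∈ Ω := hlG.1.1
    have hmΩ : m ∈ Ω := hmG.1.1
    have hlpos : 0 < l := lt_of_lt_of_le ha1 (hge l hlΩ hl0)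
    have hmpos : 0 < m := lt_of_lt_of_le ha1 (hge m hmΩ hm0)
    rw [Metric.tendsto_atTop]
    intro ε hε
    obtain ⟨u, hu, v, hv, hv0, p, q, hβ0, hβε⟩ :=
      omega_small Ω hz hadd l m hlΩ hmΩ hlpos hmpos hirr (ε/2) (by linarith)
    obtain ⟨C, hC⟩ := omega_cover Ω hz hadd u v hu hv hv0 p q hβ0
    obtain ⟨N, hN⟩ := hub C
    refine ⟨N, fun n hn => ?_⟩
    have hCn : C ≤ a n := le_trans hN.le (hmono.monotone hn)
    obtain ⟨ω, hωΩ, hω1, hω2⟩ := hC (a n) hCn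
    obtain ⟨m', rfl⟩ := hrange ▸ hωΩ
    have hnm : n < m' := hmono.lt_iff_lt.mp hω1
    have hle : a (n + 1) ≤ a m' := hmono.monotone hnm
    have hgap : 0 < a (n + 1) - a n := sub_pos.mpr (hmono (Nat.lt_succ_self n))
    rw [Real.dist_eq, sub_zero, abs_of_pos hgap]
    have : a (n + 1) ≤ a n + (ε/2) := by linarith
    linarith
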